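/- Under the same hypotheses (v a non-vanishing C² solution of ic v' + v'' + ω(v/|v|²)(1−|v|²) = 0 with v', η = 1−|v|² vanishing at infinity), one has |v'|² = −ω·ln(1−η) − ω·η on ℝ. -/

import Mathlib

open Complex Filter

private lemma hasDerivAt_normsq {w : ℝ → ℂ} {w' : ℂ} {σ : ℝ} (hw : HasDerivAt w w' σ) :
    HasDerivAt (fun t => ‖w t‖^2) (2*((w σ).re*w'.re + (w σ).im*w'.im)) σ := by
  have hre : HasDerivAt (fun t => (w t).re) w'.re σ :=
    (Complex.reCLM.hasFDerivAt.comp_hasDerivAt σ hw)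
  have him : HasDerivAt (fun t => (w t).im) w'.im σ :=
    (Complex.imCLM.hasFDerivAt.comp_hasDerivAt σ hw)
  have h := (hre.pow 2).add (him.pow 2)
  have heq : (fun t => ‖w t‖^2) = (fun t => (w t).re^2 + (w t).im^2) := by
    funext t
    rw [Complex.sq_norm, Complex.normSq_apply]
    ring
  rw [heq]
  convert h using 1 <;> try rfl
  push_cast
  ring

theorem stmt_17 (c ω : ℝ) (v : ℝ → ℂ)
    (hv : ContDiff ℝ 2 v) (hne : ∀ σ, v σ ≠ 0)
    (hODE : ∀ σ : ℝ,
      I * (c : ℂ) * deriv v σ + deriv (deriv v) σ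
        + (ω : ℂ) * (v σ / ((‖v σ‖^2 : ℝ) : ℂ)) * (1 - ((‖v σ‖^2 : ℝ) : ℂ)) = 0)
    (hv' : Tendsto (deriv v) atTop (nhds 0))
    (hη : Tendsto (fun σ => 1 - ‖v σ‖^2) atTop (nhds 0)) :
    ∀ σ : ℝ, ‖deriv v σ‖^2
      = -ω * Real.log (1 - (1 - ‖v σ‖^2)) - ω * (1 - ‖v σ‖^2) := by
  have hv2 : ContDiff ℝ ((1:ℕ∞)+1) v := hv.of_le (by norm_num)
  have hdv : Differentiable ℝ v := hv.differentiable (by norm_num)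
  have hddv : Differentiable ℝ (deriv v) :=
    ((contDiff_succ_iff_deriv.mp hv2).2.2).differentiable (by norm_num)
  set f : ℝ → ℝ := fun σ => ‖deriv v σ‖^2 + ω * Real.log (‖v σ‖^2) - ω * ‖v σ‖^2 with hf_def
  have hpos : ∀ σ, (0:ℝ) < ‖v σ‖^2 := fun σ => pow_pos (norm_pos_iff.mpr (hne σ)) 2
  have hf : ∀ σ, HasDerivAt f 0 σ := by
    intro σ
    set A := v σ with hA_def
    set B := deriv v σ with hB_def
    set C := deriv (deriv v) σ with hC_def
    set n := ‖v σ‖^2 with hn_def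
    have hn : (0:ℝ) < n := hpos σ
    have hA : HasDerivAt v B σ := (hdv σ).hasDerivAt
    have hB : HasDerivAt (deriv v) C σ := (hddv σ).hasDerivAt
    have h1 := hasDerivAt_normsq hB
    have h2 := hasDerivAt_normsq hA
    have h3 : HasDerivAt (fun t => Real.log (‖v t‖^2))
        ((2*((v σ).re*B.re + (v σ).im*B.im)) / n) σ := h2.log (ne_of_gt hn)
    have hder := (h1.add (h3.const_mul ω)).sub (h2.const_mul ω)
    have hnc : ((n:ℝ) : ℂ) ≠ 0 := by exact_mod_cast (ne_of_gt hn)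
    have hO : (n:ℂ) * C + I * c * (n:ℂ) * B + (ω:ℂ) * A * (1 - (n:ℂ)) = 0 := by
      have h := hODE σ
      rw [← hn_def, ← hB_def, ← hA_def, ← hC_def] at h
      have hA' : ((n:ℝ):ℂ) * (A / ((n:ℝ):ℂ)) = A := mul_div_cancel₀ A hnc
      linear_combination ((n:ℝ):ℂ) * h - (ω:ℂ) * (1 - ((n:ℝ):ℂ)) * hA'
    have hre := congrArg Complex.re hO
    have him := congrArg Complex.im hO
    simp only [Complex.add_re, Complex.add_im, Complex.mul_re, Complex.mul_im,
      Complex.sub_re, Complex.sub_im, Complex.one_re, Complex.one_im,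
      Complex.ofReal_re, Complex.ofReal_im, Complex.I_re, Complex.I_im,
      Complex.zero_re, Complex.zero_im] at hre him
    have key : n * (B.re*C.re + B.im*C.im) = -(ω*(1-n)) * (A.re*B.re + A.im*B.im) := by
      linear_combination B.re * hre + B.im * him
    convert hder using 1 <;> try rfl
    field_simp
    linear_combination -2 * key
  have hdiff : Differentiable ℝ f := fun σ => (hf σ).differentiableAt
  have hderiv0 : ∀ σ, deriv f σ = 0 := fun σ => (hf σ).deriv
  have hconst : ∀ σ τ, f σ = f τ := fun σ τ => is_const_of_deriv_eq_zero hdiff hderiv0 σ τ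
  have t2 : Tendsto (fun σ => ‖v σ‖^2) atTop (nhds 1) := by
    have := (tendsto_const_nhds (x := (1:ℝ)) (f := atTop)).sub hη
    simpa using this
  have t1 : Tendsto (fun σ => ‖deriv v σ‖^2) atTop (nhds 0) := by
    have := (hv'.norm).pow 2
    simpa using this
  have t3 : Tendsto (fun σ => Real.log (‖v σ‖^2)) atTop (nhds 0) := by
    have h := (Real.continuousAt_log one_ne_zero).tendsto.comp t2
    rw [Real.log_one] at h
    exact h
  have tf : Tendsto f atTop (nhds (0 + ω * 0 - ω * 1)) :=
    (t1.add (t3.const_mul ω)).sub (t2.const_mul ω)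
  rw [show (0 + ω * 0 - ω * 1 : ℝ) = -ω by ring] at tf
  intro σ
  have tfσ : Tendsto f atTop (nhds (f σ)) := by
    apply tendsto_const_nhds.congr
    intro τ
    exact hconst σ τ
  have hval : f σ = -ω := tendsto_nhds_unique tfσ tf
  have hx : (1 : ℝ) - (1 - ‖v σ‖^2) = ‖v σ‖^2 := by ring
  rw [hx]
  simp only [hf_def] at hval
  linarith [hval]
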